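/- Adding clauses shrinks the behaviour graph: let S be a finite set of SNF clauses and let T be obtained from S by adding finitely many initial clauses and finitely many step clauses involving only proposition symbols occurring in S. Then the behaviour graph of T is a subgraph of the behaviour graph of S: every node of the behaviour graph of T is a node of the behaviour graph of S, every edge of the behaviour graph of T is an edge of the behaviour graph of S, and every initial node of the behaviour graph of T is an initial node of the behaviour graph of S. -/

import Mathlib

/-- A literal over proposition symbols `P`: a proposition symbol (`pos = true`)
or a negated proposition symbol (`pos = false`). -/
structure Lit (P : Type) where
  pos : Bool
  sym : P

/-- The complement of a literal. -/
def Lit.negate {P : Type} (l : Lit P) : Lit P := ⟨!l.pos, l.sym⟩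

/-- A literal holds in model `σ` at index `i`. -/
def Lit.holds {P : Type} (σ : ℕ → Set P) (i : ℕ) (l : Lit P) : Prop :=
  if l.pos then l.sym ∈ σ i else l.sym ∉ σ i

/-- A conjunction of literals holds (the empty conjunction is the constant `true`). -/
def conjHolds {P : Type} (σ : ℕ → Set P) (i : ℕ) (L : List (Lit P)) : Prop :=
  ∀ l ∈ L, Lit.holds σ i l

/-- A disjunction of literals holds. -/
def disjHolds {P : Type} (σ : ℕ → Set P) (i : ℕ) (L : List (Lit P)) : Prop :=
  ∃ l ∈ L, Lit.holds σ i l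

/-- SNF clauses: initial clauses `start ⇒ ⋁ rhs`, step clauses `⋀ lhs ⇒ ◯⋁ rhs`
(an empty `lhs` is the constant `true`), and sometime clauses `⋀ lhs ⇒ ◇ev`. -/
inductive SNF (P : Type) : Type
  | initial (rhs : List (Lit P))
  | step (lhs rhs : List (Lit P))
  | sometime (lhs : List (Lit P)) (ev : Lit P)

/-- Satisfaction of an SNF clause in model `σ` at index `i`. -/
def SNF.holds {P : Type} (σ : ℕ → Set P) (i : ℕ) : SNF P → Prop
  | .initial rhs => i = 0 → disjHolds σ i rhs
  | .step lhs rhs => conjHolds σ i lhs → disjHolds σ (i + 1) rhs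
  | .sometime lhs ev => conjHolds σ i lhs → ∃ k, i ≤ k ∧ Lit.holds σ k ev

/-- `σ` is a model of the clause set `S`, i.e. `(σ,0) ⊨ □⋀_{A ∈ S} A`. -/
def IsModel {P : Type} (σ : ℕ → Set P) (S : Set (SNF P)) : Prop :=
  ∀ (i : ℕ), ∀ c ∈ S, SNF.holds σ i c

/-- The proposition symbols occurring in an SNF clause. -/
def SNF.syms {P : Type} : SNF P → Set P
  | .initial rhs => {p | ∃ l ∈ rhs, Lit.sym l = p}
  | .step lhs rhs => {p | ∃ l ∈ lhs ++ rhs, Lit.sym l = p}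
  | .sometime lhs ev => {p | ∃ l ∈ ev :: lhs, Lit.sym l = p}

/-- The proposition symbols occurring in a clause set. -/
def symsOf {P : Type} (S : Set (SNF P)) : Set P := ⋃ c ∈ S, c.syms

/-- The literals occurring as eventualities (◇l on the right-hand side of
sometime clauses) in `S`. -/
def evLits {P : Type} (S : Set (SNF P)) : Set (Lit P) :=
  {l | ∃ lhs, SNF.sometime lhs l ∈ S}

/-- The positive literal on symbol `p`. -/
def posLit {P : Type} (p : P) : Lit P := ⟨true, p⟩

/-- The augmented clause set `Aug(S)`, where `w l` is the fresh symbol `w_l`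
for each eventuality literal `l` of `S`: adds `w_l ⇒ ◯(l ∨ w_l)` and, for each
sometime clause `C ⇒ ◇l` of `S`, `start ⇒ (¬C ∨ l ∨ w_l)` and `true ⇒ ◯(¬C ∨ l ∨ w_l)`. -/
def Aug {P : Type} (S : Set (SNF P)) (w : Lit P → P) : Set (SNF P) :=
  S ∪ {c | ∃ l ∈ evLits S, c = SNF.step [posLit (w l)] [l, posLit (w l)]}
    ∪ {c | ∃ lhs l, SNF.sometime lhs l ∈ S ∧
          c = SNF.initial (lhs.map Lit.negate ++ [l, posLit (w l)])}
    ∪ {c | ∃ lhs l, SNF.sometime lhs l ∈ S ∧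
          c = SNF.step [] (lhs.map Lit.negate ++ [l, posLit (w l)])}

/-- The symbols `w_l` are fresh: none occurs in `S`, and distinct eventuality
literals receive distinct fresh symbols. -/
def FreshW {P : Type} (S : Set (SNF P)) (w : Lit P → P) : Prop :=
  (∀ l ∈ evLits S, ∀ c ∈ S, w l ∉ SNF.syms c) ∧ Set.InjOn w (evLits S)

/-- A normal model of `Aug(S)`: a model of `Aug(S)` which moreover satisfies
`□(w_l ⇔ (¬l ∧ ◇l))` for each eventuality literal `l` of `S`. -/
def NormalModel {P : Type} (σ : ℕ → Set P) (S : Set (SNF P)) (w : Lit P → P) : Prop :=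
  IsModel σ (Aug S w) ∧
  ∀ (i : ℕ), ∀ l ∈ evLits S,
    (w l ∈ σ i ↔ (¬ Lit.holds σ i l ∧ ∃ k, i ≤ k ∧ Lit.holds σ k l))

/-- A node of the behaviour graph: a valuation `V` (the set of proposition symbols of
`S` made true) together with a set `E` of outstanding eventuality literals. -/
abbrev BNode (P : Type) := Set P × Set (Lit P)

/-- A literal is satisfied by a valuation. -/
def litSatV {P : Type} (V : Set P) (l : Lit P) : Prop :=
  if l.pos then l.sym ∈ V else l.sym ∉ V

/-- A conjunction of literals is satisfied by a valuation (empty = `true`). -/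
def conjSatV {P : Type} (V : Set P) (L : List (Lit P)) : Prop := ∀ l ∈ L, litSatV V l

/-- A disjunction of literals is satisfied by a valuation. -/
def disjSatV {P : Type} (V : Set P) (L : List (Lit P)) : Prop := ∃ l ∈ L, litSatV V l

/-- The eventuality literals of the sometime clauses of `S` fired by valuation `V`. -/
def evSet {P : Type} (S : Set (SNF P)) (V : Set P) : Set (Lit P) :=
  {l | ∃ lhs, SNF.sometime lhs l ∈ S ∧ conjSatV V lhs}

/-- The edge relation of the behaviour graph of `S`: there is an edge from `(V,E)` to
`(V', E' ∪ E″)` whenever `V'` is a valuation over the symbols of `S` satisfying the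
right-hand side of every step clause fired by `V`, where `E'` consists of the elements
of `E` not satisfied by `V` and `E″ = evSet S V'`. -/
def bgEdge {P : Type} (S : Set (SNF P)) (n m : BNode P) : Prop :=
  m.1 ⊆ symsOf S ∧
  (∀ lhs rhs, SNF.step lhs rhs ∈ S → conjSatV n.1 lhs → disjSatV m.1 rhs) ∧
  m.2 = {l ∈ n.2 | ¬ litSatV n.1 l} ∪ evSet S m.1

/-- The initial nodes of the behaviour graph of `S`. -/
def bgInitial {P : Type} (S : Set (SNF P)) (n : BNode P) : Prop :=
  n.1 ⊆ symsOf S ∧ (∀ rhs, SNF.initial rhs ∈ S → disjSatV n.1 rhs) ∧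
  n.2 = evSet S n.1

/-- A node is in the behaviour graph of `S` iff it is reachable from an initial node. -/
def inBG {P : Type} (S : Set (SNF P)) (n : BNode P) : Prop :=
  ∃ n₀, bgInitial S n₀ ∧ Relation.ReflTransGen (bgEdge S) n₀ n

/-- A set `K` of nodes which survives the deletion rules: all its members are nodes of
the behaviour graph, every member has a successor in `K`, and for every member and
every outstanding eventuality `l` of that member, some node of `K` whose valuation
satisfies `l` is reachable from it inside `K`. -/
def goodSet {P : Type} (S : Set (SNF P)) (K : Set (BNode P)) : Prop :=
  (∀ n ∈ K, inBG S n) ∧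
  (∀ n ∈ K, ∃ m ∈ K, bgEdge S n m) ∧
  (∀ n ∈ K, ∀ l ∈ n.2,
    ∃ m ∈ K, Relation.ReflTransGen (fun a b => a ∈ K ∧ b ∈ K ∧ bgEdge S a b) n m ∧
      litSatV m.1 l)

/-- The reduced behaviour graph of `S`: the set of nodes surviving exhaustive
application of the deletion rules, i.e. the largest set closed under the two
survival conditions. -/
def reducedBG {P : Type} (S : Set (SNF P)) : Set (BNode P) :=
  ⋃₀ {K | goodSet S K}

/-- adding finitely many initial and step clauses over the symbols of
`S` shrinks the behaviour graph: every node, edge and initial node of the behaviour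
graph of `T = S ∪ U` is, respectively, a node, edge and initial node of the behaviour
graph of `S`. -/
theorem stmt_10 {P : Type} [Countable P] (S U : Set (SNF P))
    (hS : S.Finite) (hU : U.Finite)
    (hkinds : ∀ c ∈ U, (∃ rhs, c = SNF.initial rhs) ∨ ∃ lhs rhs, c = SNF.step lhs rhs)
    (hsyms : ∀ c ∈ U, SNF.syms c ⊆ symsOf S) :
    (∀ n : BNode P, inBG (S ∪ U) n → inBG S n) ∧
    (∀ n m : BNode P, inBG (S ∪ U) n → bgEdge (S ∪ U) n m →
      inBG S n ∧ bgEdge S n m) ∧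
    (∀ n : BNode P, bgInitial (S ∪ U) n → bgInitial S n) := by
  have hsymsEq : symsOf (S ∪ U) = symsOf S := by
    apply Set.Subset.antisymm
    · intro p hp
      simp only [symsOf, Set.mem_iUnion] at hp ⊢
      obtain ⟨c, hc, hpc⟩ := hp
      rcases hc with hc | hc
      · exact ⟨c, hc, hpc⟩
      · have := hsyms c hc hpc
        simpa [symsOf, Set.mem_iUnion] using this
    · intro p hp
      simp only [symsOf, Set.mem_iUnion] at hp ⊢
      obtain ⟨c, hc, hpc⟩ := hp
      exact ⟨c, Or.inl hc, hpc⟩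
  have hsomet : ∀ lhs l, SNF.sometime lhs l ∈ S ∪ U ↔ SNF.sometime lhs l ∈ S := by
    intro lhs l
    constructor
    · rintro (h | h)
      · exact h
      · rcases hkinds _ h with ⟨rhs, h'⟩ | ⟨lh, rh, h'⟩ <;> simp at h'
    · exact Or.inl
  have hevSet : ∀ V, evSet (S ∪ U) V = evSet S V := by
    intro V
    ext l
    simp only [evSet, Set.mem_setOf_eq]
    constructor
    · rintro ⟨lhs, h, hs⟩; exact ⟨lhs, (hsomet lhs l).1 h, hs⟩
    · rintro ⟨lhs, h, hs⟩; exact ⟨lhs, Or.inl h, hs⟩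
  have hedge : ∀ n m, bgEdge (S ∪ U) n m → bgEdge S n m := by
    intro n m ⟨h1, h2, h3⟩
    exact ⟨hsymsEq ▸ h1, fun lhs rhs hm => h2 lhs rhs (Or.inl hm),
      by rw [h3, hevSet]⟩
  have hinit : ∀ n, bgInitial (S ∪ U) n → bgInitial S n := by
    intro n ⟨h1, h2, h3⟩
    exact ⟨hsymsEq ▸ h1, fun rhs hm => h2 rhs (Or.inl hm), by rw [h3, hevSet]⟩
  have hBG : ∀ n, inBG (S ∪ U) n → inBG S n := by
    rintro n ⟨n₀, h₀, hr⟩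
    exact ⟨n₀, hinit n₀ h₀, Relation.ReflTransGen.mono (fun a b => hedge a b) n₀ n hr⟩
  exact ⟨hBG, fun n m hn he => ⟨hBG n hn, hedge n m he⟩, hinit⟩
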